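/- Let G=(V,E) be a dilating contextuality scenario and let x ∈ V be a vertex such that some probabilistic model p₀ of G satisfies p₀(x) > 0. Then there exists a probabilistic model p of G with p(x) = 1. -/

import Mathlib

noncomputable section

structure HilbertC where
  carrier : Type
  [normed : NormedAddCommGroup carrier]
  [ips : InnerProductSpace ℂ carrier]
  [complete : CompleteSpace carrier]

attribute [instance] HilbertC.normed HilbertC.ips HilbertC.complete

/-- A positive operator representation of the hypergraph with edge set `E`. -/
def IsPOR {V : Type} [Fintype V] (E : Finset (Finset V)) {H : Type}
    [NormedAddCommGroup H] [InnerProductSpace ℂ H] [CompleteSpace H]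
    (A : V → H →L[ℂ] H) : Prop :=
  (∀ x, (A x).IsPositive) ∧ ∀ e ∈ E, ∑ x ∈ e, A x = 1

/-- A projective representation of the hypergraph with edge set `E`. -/
def IsPR {V : Type} [Fintype V] (E : Finset (Finset V)) {H : Type}
    [NormedAddCommGroup H] [InnerProductSpace ℂ H] [CompleteSpace H]
    (A : V → H →L[ℂ] H) : Prop :=
  (∀ x, IsSelfAdjoint (A x) ∧ IsIdempotentElem (A x)) ∧ ∀ e ∈ E, ∑ x ∈ e, A x = 1

/-- The POR `A` dilates to a projective representation. -/
def DilatesToPR {V : Type} [Fintype V] (E : Finset (Finset V)) {H : Type}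
    [NormedAddCommGroup H] [InnerProductSpace ℂ H] [CompleteSpace H]
    (A : V → H →L[ℂ] H) : Prop :=
  ∃ (K : HilbertC) (B : V → K.carrier →L[ℂ] K.carrier) (Vi : H →L[ℂ] K.carrier),
    IsPR E B ∧ Isometry Vi ∧
    ∀ x, A x = (ContinuousLinearMap.adjoint Vi).comp ((B x).comp Vi)

/-- The hypergraph `(V, E)` is dilating. -/
def Dilating (V : Type) [Fintype V] (E : Finset (Finset V)) : Prop :=
  ∀ (H : HilbertC) (A : V → H.carrier →L[ℂ] H.carrier), IsPOR E A → DilatesToPR E A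

/-- A probabilistic model of the hypergraph with edge set `E`. -/
def IsModel {V : Type} [Fintype V] (E : Finset (Finset V)) (p : V → ℝ) : Prop :=
  (∀ x, 0 ≤ p x ∧ p x ≤ 1) ∧ ∀ e ∈ E, ∑ x ∈ e, p x = 1

theorem stmt7 (V : Type) [Fintype V] [DecidableEq V]
    (E : Finset (Finset V)) (hEne : E.Nonempty) (hene : ∀ e ∈ E, e.Nonempty)
    (hcover : ∀ x : V, ∃ e ∈ E, x ∈ e)
    (hdil : Dilating V E)
    (x : V) (p₀ : V → ℝ) (hp₀ : IsModel E p₀) (hx : 0 < p₀ x) :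
    ∃ p : V → ℝ, IsModel E p ∧ p x = 1 := by
  classical
  -- the scalar POR on ℂ induced by p₀
  let A : V → ℂ →L[ℂ] ℂ := fun y => (p₀ y : ℂ) • (1 : ℂ →L[ℂ] ℂ)
  have hPOR : IsPOR E A := by
    constructor
    · intro y
      refine ContinuousLinearMap.isPositive_def'.2 ⟨?_, ?_⟩
      · show star _ = _
        rw [star_smul, star_one, RCLike.star_def, Complex.conj_ofReal]
      · intro w
        have h1 : (A y).reApplyInnerSelf w = p₀ y * ‖w‖ ^ 2 := by
          simp only [ContinuousLinearMap.reApplyInnerSelf, A,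
            ContinuousLinearMap.smul_apply, ContinuousLinearMap.one_apply,
            inner_smul_left, RCLike.star_def, Complex.conj_ofReal,
            inner_self_eq_norm_sq_to_K]
          simp [RCLike.mul_re]; exact Or.inl (by norm_cast)
        rw [h1]
        exact mul_nonneg (hp₀.1 y).1 (sq_nonneg _)
    · intro e he
      have := hp₀.2 e he
      simp only [A, ← Finset.sum_smul]
      rw [← Complex.ofReal_sum, this]
      simp
  obtain ⟨K, B, Vi, hBPR, hViIso, hdilate⟩ := hdil ⟨ℂ⟩ A hPOR
  -- projection facts
  have hproj : ∀ (y : V) (w : K.carrier), (inner ℂ w (B y w) : ℂ) = (‖B y w‖ : ℂ) ^ 2 := by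
    intro y w
    have hsa := (hBPR.1 y).1
    have hid := (hBPR.1 y).2
    have h1 : B y w = B y (B y w) := by
      conv_lhs => rw [← hid]
      rfl
    calc (inner ℂ w (B y w) : ℂ) = inner ℂ w (B y (B y w)) := by rw [← h1]
      _ = inner ℂ ((ContinuousLinearMap.adjoint (B y)) w) (B y w) := by
          rw [ContinuousLinearMap.adjoint_inner_left]
      _ = inner ℂ (B y w) (B y w) := by rw [hsa.adjoint_eq]
      _ = (‖B y w‖ : ℂ) ^ 2 := inner_self_eq_norm_sq_to_K _
  set v : K.carrier := Vi 1 with hv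
  have hinner : ∀ y : V, (inner ℂ v (B y v) : ℂ) = (p₀ y : ℂ) := by
    intro y
    have h := hdilate y
    have h1 : A y 1 = (ContinuousLinearMap.adjoint Vi) (B y (Vi 1)) := by
      rw [h]; rfl
    have h2 : (inner ℂ (1 : ℂ) (A y 1) : ℂ) = (p₀ y : ℂ) := by
      simp [A, inner_smul_right]
    rw [h1, ContinuousLinearMap.adjoint_inner_right] at h2
    exact h2
  -- B x v is nonzero
  have hxnorm : ‖B x v‖ ^ 2 = p₀ x := by
    have h := (hproj x v).symm.trans (hinner x)
    have h2 : ((‖B x v‖ ^ 2 : ℝ) : ℂ) = ((p₀ x : ℝ) : ℂ) := by push_cast; exact h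
    exact_mod_cast h2
  have hBxvne : ‖B x v‖ ≠ 0 := by
    intro h
    rw [h] at hxnorm
    simp at hxnorm
    exact absurd hxnorm.symm (ne_of_gt hx)
  -- normalized vector in the range of B x
  set c : ℂ := ((‖B x v‖⁻¹ : ℝ) : ℂ) with hc
  set u : K.carrier := c • B x v with hudef
  have hu : ‖u‖ = 1 := by
    rw [hudef, norm_smul, hc]
    simp [abs_of_nonneg (inv_nonneg.2 (norm_nonneg _))]
    exact inv_mul_cancel₀ hBxvne
  have hBxu : B x u = u := by
    have hid := (hBPR.1 x).2
    have : B x (B x v) = B x v := by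
      conv_lhs => rw [show B x (B x v) = (B x * B x) v from rfl, hid]
    rw [hudef, map_smul, this]
  refine ⟨fun y => ‖B y u‖ ^ 2, ⟨?_, ?_⟩, ?_⟩
  · -- bounds
    have hsum : ∀ e ∈ E, ∑ y ∈ e, ‖B y u‖ ^ 2 = 1 := by
      intro e he
      have hC : ((∑ y ∈ e, ‖B y u‖ ^ 2 : ℝ) : ℂ) = 1 := by
        push_cast
        calc (∑ y ∈ e, (‖B y u‖ : ℂ) ^ 2)
            = ∑ y ∈ e, (inner ℂ u (B y u) : ℂ) := by
              exact Finset.sum_congr rfl fun y _ => (hproj y u).symm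
          _ = (inner ℂ u ((∑ y ∈ e, B y) u) : ℂ) := by
              rw [ContinuousLinearMap.sum_apply, inner_sum]
          _ = (inner ℂ u u : ℂ) := by rw [hBPR.2 e he]; rfl
          _ = 1 := by rw [inner_self_eq_norm_sq_to_K, hu]; norm_num
      exact_mod_cast hC
    intro y
    refine ⟨sq_nonneg _, ?_⟩
    obtain ⟨e, he, hye⟩ := hcover y
    have := hsum e he
    calc ‖B y u‖ ^ 2 ≤ ∑ z ∈ e, ‖B z u‖ ^ 2 :=
          Finset.single_le_sum (f := fun z => ‖B z u‖ ^ 2) (fun z _ => sq_nonneg _) hye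
      _ = 1 := this
  · -- edge sums
    intro e he
    have hC : ((∑ y ∈ e, ‖B y u‖ ^ 2 : ℝ) : ℂ) = 1 := by
      push_cast
      calc (∑ y ∈ e, (‖B y u‖ : ℂ) ^ 2)
          = ∑ y ∈ e, (inner ℂ u (B y u) : ℂ) :=
            Finset.sum_congr rfl fun y _ => (hproj y u).symm
        _ = (inner ℂ u ((∑ y ∈ e, B y) u) : ℂ) := by
            rw [ContinuousLinearMap.sum_apply, inner_sum]
        _ = (inner ℂ u u : ℂ) := by rw [hBPR.2 e he]; rfl
        _ = 1 := by rw [inner_self_eq_norm_sq_to_K, hu]; norm_num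
    exact_mod_cast hC
  · show ‖B x u‖ ^ 2 = 1
    rw [hBxu, hu]; norm_num
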